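/- The axiom KwCon is valid: for any Kripke model M and world s, if Δ(q→p) and Δ(¬q→p) hold at s, then Δp holds at s. -/
import Mathlib

/-- Δ (knowing whether) semantics: all R-successors of s agree on φ. -/
def delta {S : Type*} (R : S → S → Prop) (φ : S → Prop) (s : S) : Prop :=
  (∀ t, R s t → φ t) ∨ (∀ t, R s t → ¬ φ t)

/-- KwCon: Δ(q→p) ∧ Δ(¬q→p) → Δp is valid. -/
theorem kwCon_valid {S : Type*} (R : S → S → Prop) (p q : S → Prop) (s : S)
    (h1 : delta R (fun t => q t → p t) s) (h2 : delta R (fun t => ¬ q t → p t) s) :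
    delta R p s := by
  rcases h1 with h1 | h1 <;> rcases h2 with h2 | h2
  · left; intro t ht; by_cases hq : q t
    · exact h1 t ht hq
    · exact h2 t ht hq
  · right; intro t ht hp; exact h2 t ht (fun _ => hp)
  · right; intro t ht hp; exact h1 t ht (fun _ => hp)
  · right; intro t ht hp; exact h1 t ht (fun _ => hp)
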